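/- There exists an advice string A such that the class of languages terminating regular with advice A differs from the class nonterminating regular with advice A: concretely, if A ∈ {0,1}^ω is chosen so that Pref(A) is not regular (without advice), then the unary language L = {0ⁿ : the (n+1)-st character of A is 1} is nonterminating regular with advice A but not terminating regular with advice A. -/

import Mathlib

open Classical

/-- The run of a (terminating) automaton with advice. -/
def advRun {Q S Γ : Type*} (δ : Q → Γ → S → Q) (A : ℕ → Γ) : Q → ℕ → List S → Q
  | q, _, [] => q
  | q, n, a :: w => advRun δ A (δ q (A n) a) (n + 1) w

/-- The language accepted by a terminating automaton with advice. -/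
def advAccepts {Q S Γ : Type*} (δ : Q → Γ → S → Q) (A : ℕ → Γ) (q0 : Q) (F : Set Q) :
    Set (List S) :=
  {w | advRun δ A q0 0 w ∈ F}

/-- The infinite run of a nonterminating automaton with advice on a finite word
`w`: after `w` ends, the automaton reads blanks (`none`) with the advice. -/
def ntRun {Q S Γ : Type*} (δ : Q → Γ → Option S → Q) (A : ℕ → Γ) (q0 : Q)
    (w : List S) : ℕ → Q
  | 0 => q0
  | n + 1 => δ (ntRun δ A q0 w n) (A n) w[n]?

/-- The language accepted by a nonterminating automaton with advice, via the
Muller condition `F ⊆ P(Q)` on the set of infinitely visited states. -/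
def ntAccepts {Q S Γ : Type*} (δ : Q → Γ → Option S → Q) (A : ℕ → Γ) (q0 : Q)
    (F : Set (Set Q)) : Set (List S) :=
  {w | {q | {n | ntRun δ A q0 w n = q}.Infinite} ∈ F}

/-- `L` is terminating regular with advice `A`. -/
def TermRegWith {S Γ : Type*} (A : ℕ → Γ) (L : Set (List S)) : Prop :=
  ∃ (Q : Type) (_ : Fintype Q) (δ : Q → Γ → S → Q) (q0 : Q) (F : Set Q),
    advAccepts δ A q0 F = L

/-- `L` is nonterminating regular with advice `A`. -/
def NontermRegWith {S Γ : Type*} (A : ℕ → Γ) (L : Set (List S)) : Prop :=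
  ∃ (Q : Type) (_ : Fintype Q) (δ : Q → Γ → Option S → Q) (q0 : Q) (F : Set (Set Q)),
    ntAccepts δ A q0 F = L

/-- The set of finite prefixes of the infinite string `A`. -/
def Pref {S : Type*} (A : ℕ → S) : Set (List S) :=
  {w | ∀ i : Fin w.length, w.get i = A i}

open scoped Classical

/-! ### Auxiliary material -/

/-- The sequence of states of a terminating advice automaton along the unary words. -/
def seqQ {Q : Type} (δ : Q → Bool → Unit → Q) (A : ℕ → Bool) (q0 : Q) : ℕ → Q
  | 0 => q0
  | n + 1 => δ (seqQ δ A q0 n) (A n) ()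

lemma advRun_seq {Q : Type} (δ : Q → Bool → Unit → Q) (A : ℕ → Bool) (q0 : Q) :
    ∀ (m n : ℕ), advRun δ A (seqQ δ A q0 n) n (List.replicate m ()) = seqQ δ A q0 (n + m)
  | 0, n => rfl
  | m + 1, n => by
    rw [List.replicate_succ]
    show advRun δ A (δ (seqQ δ A q0 n) (A n) ()) (n + 1) (List.replicate m ()) = _
    rw [show δ (seqQ δ A q0 n) (A n) () = seqQ δ A q0 (n + 1) from rfl,
      advRun_seq δ A q0 m (n + 1)]
    exact congrArg (seqQ δ A q0) (by omega)

/-- The DFA (without advice) recognizing `Pref A`, built from a terminating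
advice automaton accepting the unary language of `A`. -/
noncomputable def prefDFA {Q : Type} (δ : Q → Bool → Unit → Q) (q0 : Q) (F : Set Q) :
    DFA Bool (Option Q) where
  step s b := match s with
    | none => none
    | some q => if b = decide (q ∈ F) then some (δ q b ()) else none
  start := some q0
  accept := {s | s.isSome}

lemma prefDFA_eval_none {Q : Type} (δ : Q → Bool → Unit → Q) (q0 : Q) (F : Set Q) :
    ∀ w : List Bool, (prefDFA δ q0 F).evalFrom none w = none
  | [] => rfl
  | b :: t => by
    show (prefDFA δ q0 F).evalFrom ((prefDFA δ q0 F).step none b) t = none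
    exact prefDFA_eval_none δ q0 F t

lemma prefDFA_eval_pos {Q : Type} (δ : Q → Bool → Unit → Q) (A : ℕ → Bool) (q0 : Q)
    (F : Set Q) (hF : ∀ n, decide (seqQ δ A q0 n ∈ F) = A n) :
    ∀ (w : List Bool) (n : ℕ), (∀ i : Fin w.length, w.get i = A (n + i)) →
      (prefDFA δ q0 F).evalFrom (some (seqQ δ A q0 n)) w = some (seqQ δ A q0 (n + w.length))
  | [], n, _ => rfl
  | b :: t, n, hw => by
    have hb : b = A n := by simpa using hw ⟨0, Nat.succ_pos _⟩
    have hstep : (prefDFA δ q0 F).step (some (seqQ δ A q0 n)) b = some (seqQ δ A q0 (n + 1)) := by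
      show (if b = decide (seqQ δ A q0 n ∈ F) then some (δ (seqQ δ A q0 n) b ()) else none) = _
      rw [hF n, if_pos hb, hb]
      rfl
    show (prefDFA δ q0 F).evalFrom ((prefDFA δ q0 F).step (some (seqQ δ A q0 n)) b) t = _
    rw [hstep]
    have hshift : ∀ i : Fin t.length, t.get i = A (n + 1 + i) := by
      intro i
      have h0 : t.get i = A (n + (↑i + 1)) := hw i.succ
      rw [h0]
      exact congrArg A (by omega)
    rw [prefDFA_eval_pos δ A q0 F hF t (n + 1) hshift]
    exact congrArg (fun k => some (seqQ δ A q0 k)) (by simp; omega)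

lemma prefDFA_eval_neg {Q : Type} (δ : Q → Bool → Unit → Q) (A : ℕ → Bool) (q0 : Q)
    (F : Set Q) (hF : ∀ n, decide (seqQ δ A q0 n ∈ F) = A n) :
    ∀ (w : List Bool) (n : ℕ),
      (prefDFA δ q0 F).evalFrom (some (seqQ δ A q0 n)) w ≠ none →
      ∀ i : Fin w.length, w.get i = A (n + i)
  | [], n, _ => fun i => i.elim0
  | b :: t, n, hne => by
    have hcons : (prefDFA δ q0 F).evalFrom (some (seqQ δ A q0 n)) (b :: t) =
        (prefDFA δ q0 F).evalFrom ((prefDFA δ q0 F).step (some (seqQ δ A q0 n)) b) t := rfl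
    have hstep_def : (prefDFA δ q0 F).step (some (seqQ δ A q0 n)) b =
        (if b = decide (seqQ δ A q0 n ∈ F) then some (δ (seqQ δ A q0 n) b ()) else none) := rfl
    by_cases hb : b = decide (seqQ δ A q0 n ∈ F)
    · have hbA : b = A n := by rw [hb, hF n]
      have hstep : (prefDFA δ q0 F).step (some (seqQ δ A q0 n)) b =
          some (seqQ δ A q0 (n + 1)) := by
        rw [hstep_def, if_pos hb, hbA]; rfl
      rw [hcons, hstep] at hne
      have ht := prefDFA_eval_neg δ A q0 F hF t (n + 1) hne
      intro i
      refine Fin.cases ?_ ?_ i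
      · simpa using hbA
      · intro j
        show t.get j = A (n + (↑j + 1))
        rw [ht j]
        exact congrArg A (by omega)
    · exfalso
      apply hne
      rw [hcons, hstep_def, if_neg hb]
      exact prefDFA_eval_none δ q0 F t

lemma prefDFA_accepts {Q : Type} (δ : Q → Bool → Unit → Q) (A : ℕ → Bool) (q0 : Q)
    (F : Set Q) (hF : ∀ n, decide (seqQ δ A q0 n ∈ F) = A n) :
    (prefDFA δ q0 F).accepts = (show Language Bool from Pref A) := by
  ext w
  rw [DFA.mem_accepts]
  have hstart : (prefDFA δ q0 F).eval w =
      (prefDFA δ q0 F).evalFrom (some (seqQ δ A q0 0)) w := rfl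
  constructor
  · intro hw
    intro i
    have hne : (prefDFA δ q0 F).evalFrom (some (seqQ δ A q0 0)) w ≠ none := by
      rw [← hstart]
      intro hcontra
      rw [hcontra] at hw
      have hfalse : Option.isSome (none : Option Q) = true := hw
      simp at hfalse
    have := prefDFA_eval_neg δ A q0 F hF w 0 hne i
    simpa using this
  · intro hw
    have := prefDFA_eval_pos δ A q0 F hF w 0 (fun i => by simpa using hw i)
    show ((prefDFA δ q0 F).eval w).isSome
    rw [hstart, this]
    rfl

lemma pref_injective : Function.Injective (fun A : ℕ → Bool => (show Language Bool from Pref A)) := by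
  intro A B hAB
  have hP : Pref A = Pref B := hAB
  funext n
  set w : List Bool := List.ofFn (fun i : Fin (n + 1) => A i) with hw
  have hwA : w ∈ Pref A := by
    intro i
    rw [List.get_ofFn]
    rfl
  have hwB : w ∈ Pref B := hP ▸ hwA
  have hlen : n < w.length := by simp [hw]
  have h1 : w.get ⟨n, hlen⟩ = A n := hwA ⟨n, hlen⟩
  have h2 : w.get ⟨n, hlen⟩ = B n := hwB ⟨n, hlen⟩
  rw [← h1, h2]

lemma not_countable_fun : ¬ Countable (ℕ → Bool) := by
  intro h
  obtain ⟨f, hf⟩ := exists_injective_nat (ℕ → Bool)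
  refine Function.cantor_injective (fun s : Set ℕ => f (fun n => decide (n ∈ s))) ?_
  intro s t hst
  have := hf hst
  ext n
  have := congrFun this n
  simpa using this

lemma exists_pref_not_regular : ∃ A : ℕ → Bool, ¬ (show Language Bool from Pref A).IsRegular := by
  by_contra hcon
  push_neg at hcon
  apply not_countable_fun
  have key : ∀ A : ℕ → Bool,
      ∃ p : Σ n : ℕ, ((Fin n → Bool → Fin n) × Fin n × Set (Fin n)),
        (DFA.mk p.2.1 p.2.2.1 p.2.2.2).accepts = (show Language Bool from Pref A) := by
    intro A
    obtain ⟨σ, x, M, hM⟩ := hcon A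
    haveI := x
    refine ⟨⟨Fintype.card σ, (DFA.reindex (Fintype.equivFin σ) M).step,
      (DFA.reindex (Fintype.equivFin σ) M).start, (DFA.reindex (Fintype.equivFin σ) M).accept⟩, ?_⟩
    show (DFA.reindex (Fintype.equivFin σ) M).accepts = _
    rw [DFA.accepts_reindex]
    exact hM
  choose enc henc using key
  have hinj : Function.Injective enc := by
    intro A B hAB
    apply pref_injective
    show (show Language Bool from Pref A) = (show Language Bool from Pref B)
    rw [← henc A, ← henc B, hAB]
  exact Countable.of_equiv _ (Equiv.ofInjective enc hinj).symm

/-! ### The nonterminating automaton -/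

/-- Transition function of the nonterminating automaton: stay in `none` while
reading input; on the first blank, record the current advice bit. -/
def ntδ : Option Bool → Bool → Option Unit → Option Bool
  | none, g, none => some g
  | none, _, some _ => none
  | some b, _, _ => some b

lemma ntRun_le (A : ℕ → Bool) (w : List Unit) :
    ∀ n, n ≤ w.length → ntRun ntδ A none w n = none := by
  intro n
  induction n with
  | zero => intro _; rfl
  | succ m ih =>
    intro hm
    have hlt : m < w.length := by omega
    show ntδ (ntRun ntδ A none w m) (A m) w[m]? = none
    rw [ih (by omega), List.getElem?_eq_getElem hlt]
    rfl

lemma ntRun_gt (A : ℕ → Bool) (w : List Unit) :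
    ∀ k, ntRun ntδ A none w (w.length + 1 + k) = some (A w.length) := by
  intro k
  induction k with
  | zero =>
    show ntδ (ntRun ntδ A none w w.length) (A w.length) w[w.length]? = some (A w.length)
    rw [ntRun_le A w w.length le_rfl, List.getElem?_eq_none le_rfl]
    rfl
  | succ m ih =>
    have : w.length + 1 + (m + 1) = (w.length + 1 + m) + 1 := by omega
    rw [this]
    show ntδ (ntRun ntδ A none w (w.length + 1 + m)) _ _ = some (A w.length)
    rw [ih]
    rfl

lemma ntRun_values (A : ℕ → Bool) (w : List Unit) (n : ℕ) :
    ntRun ntδ A none w n = none ∨ ntRun ntδ A none w n = some (A w.length) := by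
  rcases le_or_gt n w.length with h | h
  · exact Or.inl (ntRun_le A w n h)
  · right
    have : n = w.length + 1 + (n - (w.length + 1)) := by omega
    rw [this]
    exact ntRun_gt A w _

lemma nonterm_part (A : ℕ → Bool) :
    NontermRegWith (S := Unit) A {w | A w.length = true} := by
  refine ⟨Option Bool, inferInstance, ntδ, none, {s : Set (Option Bool) | some true ∈ s}, ?_⟩
  ext w
  simp only [ntAccepts, Set.mem_setOf_eq]
  constructor
  · intro hinf
    by_contra hA
    have : {n | ntRun ntδ A none w n = some true} = ∅ := by
      ext n
      simp only [Set.mem_setOf_eq, Set.mem_empty_iff_false, iff_false]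
      intro hcontra
      rcases ntRun_values A w n with h | h
      · rw [h] at hcontra; cases hcontra
      · rw [h] at hcontra
        exact hA (Option.some.inj hcontra)
    rw [this] at hinf
    exact hinf Set.finite_empty
  · intro hA
    have hsub : Set.Ici (w.length + 1) ⊆ {n | ntRun ntδ A none w n = some true} := by
      intro n hn
      have hn' : n = w.length + 1 + (n - (w.length + 1)) := by
        simp only [Set.mem_Ici] at hn; omega
      show ntRun ntδ A none w n = some true
      rw [hn', ntRun_gt A w, hA]
    exact (Set.Ici_infinite _).mono hsub

lemma term_part (A : ℕ → Bool) (hA : ¬ (show Language Bool from Pref A).IsRegular) :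
    ¬ TermRegWith (S := Unit) A {w | A w.length = true} := by
  rintro ⟨Q, fQ, δ, q0, F, hacc⟩
  haveI := fQ
  apply hA
  have hrun : ∀ n, advRun δ A q0 0 (List.replicate n ()) = seqQ δ A q0 n := by
    intro n
    have := advRun_seq δ A q0 n 0
    simp only [zero_add] at this; exact this
  have hF : ∀ n, decide (seqQ δ A q0 n ∈ F) = A n := by
    intro n
    have hmem : List.replicate n () ∈ advAccepts δ A q0 F ↔ A n = true := by
      rw [hacc]
      simp [Set.mem_setOf_eq]
    have hiff : seqQ δ A q0 n ∈ F ↔ A n = true := by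
      rw [← hrun n]
      exact hmem
    cases hAn : A n with
    | false =>
      rw [hAn] at hiff
      simp only [decide_eq_false_iff_not]
      intro hcontra
      exact Bool.noConfusion (hiff.mp hcontra)
    | true =>
      rw [hAn] at hiff
      simp only [decide_eq_true_eq]
      exact hiff.mpr rfl
  exact ⟨Option Q, inferInstance, prefDFA δ q0 F, prefDFA_accepts δ A q0 F hF⟩

/-- There is an advice `A ∈ {0,1}^ω` — any `A` with `Pref A` non-regular — such
that the unary language `L = {0ⁿ : the (n+1)-st character of A is 1}` is
nonterminating regular with advice `A` but not terminating regular with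
advice `A`; in particular `L_T(A) ≠ L_N(A)`. -/
theorem exists_advice_term_ne_nonterm :
    ∃ A : ℕ → Bool,
      ¬ (show Language Bool from Pref A).IsRegular ∧
      NontermRegWith (S := Unit) A {w | A w.length = true} ∧
      ¬ TermRegWith (S := Unit) A {w | A w.length = true} := by
  obtain ⟨A, hA⟩ := exists_pref_not_regular
  exact ⟨A, hA, nonterm_part A, term_part A hA⟩
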